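/- Let α be the real root of X^3 − X^2 − X − 1 with α > 1 and a = 1/(−α^2 + 4α − 1). Then a and α are multiplicatively independent, i.e., there are no nonzero integers x, y with a^x·α^y = 1. -/

import Mathlib

open Polynomial

lemma tribo_norat (r : ℚ) (h : r^3 = r^2 + r + 1) : False := by
  have hd0 : ((r.den : ℚ)) ≠ 0 := by exact_mod_cast r.den_ne_zero
  have h2 : (r.num : ℚ)^3 = r.num^2 * r.den + r.num * (r.den:ℚ)^2 + (r.den:ℚ)^3 := by
    have hnum : (r.num:ℚ) = r * r.den := by rw [Rat.mul_den_eq_num]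
    rw [hnum]
    linear_combination (r.den:ℚ)^3 * h
  have h3 : r.num^3 = r.num^2 * (r.den:ℤ) + r.num * (r.den:ℤ)^2 + (r.den:ℤ)^3 := by
    exact_mod_cast h2
  have hdvd : (r.den:ℤ) ∣ r.num^3 := ⟨r.num^2 + r.num * r.den + (r.den:ℤ)^2, by linarith [h3]⟩
  have hdvd' : r.den ∣ r.num.natAbs^3 := by
    have := Int.natAbs_dvd_natAbs.mpr hdvd
    simpa [Int.natAbs_pow] using this
  have hcop : Nat.Coprime r.den (r.num.natAbs^3) := (r.reduced.pow_left 3).symm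
  have hden1 : r.den = 1 := Nat.Coprime.eq_one_of_dvd hcop hdvd'
  -- so r is an integer
  have h4 : r.num^3 = r.num^2 + r.num + 1 := by
    rw [hden1] at h3; push_cast at h3; linarith
  have hu : r.num ∣ 1 := ⟨r.num^2 - r.num - 1, by linarith⟩
  rcases Int.isUnit_iff.mp (isUnit_of_dvd_one hu) with h1 | h1 <;> rw [h1] at h4 <;> norm_num at h4


lemma tribo_key (α : ℝ) (hα : α ^ 3 = α ^ 2 + α + 1) (hα1 : 1 < α)
    (m n : ℕ) (hmn : (-α^2+4*α-1) ^ m = α ^ n) : m = 0 := by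
  by_contra hm
  have hα2 : α < 2 := by nlinarith [sq_nonneg α]
  have hα53 : 5/3 < α := by nlinarith [sq_nonneg (3*α+1)]
  have hαC : α * (α^2 - α - 1) = 1 := by linear_combination hα
  have hD : 0 < 3*α^2 - 2*α - 5 := by nlinarith
  set t : ℝ := Real.sqrt (3*α^2 - 2*α - 5) with ht
  have ht2 : t^2 = 3*α^2 - 2*α - 5 := Real.sq_sqrt hD.le
  set β : ℂ := ⟨(1-α)/2, t/2⟩ with hβ
  set γ : ℂ := ⟨(1-α)/2, -t/2⟩ with hγ
  have hβq : β^2 + ((α:ℂ)-1)*β + ((α:ℂ)^2-(α:ℂ)-1) = 0 := by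
    rw [Complex.ext_iff]
    constructor
    · simp [hβ, pow_two, Complex.mul_re, Complex.mul_im]
      nlinarith [ht2]
    · simp [hβ, pow_two, Complex.mul_re, Complex.mul_im]
      ring
  have hγq : γ^2 + ((α:ℂ)-1)*γ + ((α:ℂ)^2-(α:ℂ)-1) = 0 := by
    rw [Complex.ext_iff]
    constructor
    · simp [hγ, pow_two, Complex.mul_re, Complex.mul_im]
      nlinarith [ht2]
    · simp [hγ, pow_two, Complex.mul_re, Complex.mul_im]
      ring
  have hαC' : (α:ℂ)^3 = (α:ℂ)^2 + α + 1 := by exact_mod_cast hα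
  have hβ3 : β^3 = β^2 + β + 1 := by
    linear_combination (β - (α:ℂ)) * hβq + hαC'
  have hγ3 : γ^3 = γ^2 + γ + 1 := by
    linear_combination (γ - (α:ℂ)) * hγq + hαC'
  have hsum : β + γ = ((1 - α : ℝ) : ℂ) := by
    rw [Complex.ext_iff]; constructor <;> simp [hβ, hγ] <;> ring
  have hprod : β * γ = ((α^2 - α - 1 : ℝ) : ℂ) := by
    rw [Complex.ext_iff]; constructor <;>
      simp [hβ, hγ, Complex.mul_re, Complex.mul_im, ← Complex.ofReal_pow] <;> nlinarith [ht2]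
  -- polynomial algebra
  set q : ℚ[X] := X^3 - X^2 - X - 1 with hq
  have hqmonic : q.Monic := by
    rw [hq]; monicity!
  have hqdeg : q.natDegree = 3 := by rw [hq]; compute_degree!
  have hq0 : q ≠ 0 := hqmonic.ne_zero
  have hqaev : Polynomial.aeval α q = 0 := by
    simp [hq]; linear_combination hα
  have hirr : Irreducible q := by
    rw [Polynomial.irreducible_iff_roots_eq_zero_of_degree_le_three (by rw [hqdeg]; norm_num)
      (by rw [hqdeg])]
    rw [Multiset.eq_zero_iff_forall_notMem]
    intro r hr
    rw [Polynomial.mem_roots hq0] at hr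
    have hr' : r^3 = r^2 + r + 1 := by
      have := hr
      simp [hq, Polynomial.IsRoot] at this
      linear_combination this
    exact tribo_norat r hr'
  have hmin : minpoly ℚ α = q := (minpoly.eq_of_irreducible_of_monic hirr hqaev hqmonic).symm
  set P : ℚ[X] := (-X^2 + 4*X - 1)^m - X^n with hP
  have hPaev : Polynomial.aeval α P = 0 := by
    simp [hP, map_ofNat]
    push_cast
    linear_combination hmn
  obtain ⟨k, hk⟩ : q ∣ P := hmin ▸ minpoly.dvd ℚ α hPaev
  have hβq0 : Polynomial.aeval β q = 0 := by simp [hq]; linear_combination hβ3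
  have hγq0 : Polynomial.aeval γ q = 0 := by simp [hq]; linear_combination hγ3
  have hβm : (-β^2 + 4*β - 1)^m = β^n := by
    have : Polynomial.aeval β P = 0 := by rw [hk, map_mul, hβq0, zero_mul]
    simp [hP, sub_eq_zero, map_ofNat] at this
    push_cast at this
    linear_combination this
  have hγm : (-γ^2 + 4*γ - 1)^m = γ^n := by
    have : Polynomial.aeval γ P = 0 := by rw [hk, map_mul, hγq0, zero_mul]
    simp [hP, sub_eq_zero, map_ofNat] at this
    push_cast at this
    linear_combination this
  -- combine
  set r : ℝ := (α^2-α-1)^2 - 4*(α^2-α-1)*(1-α) + (1-α)^2 + 14*(α^2-α-1) - 4*(1-α) + 1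
    with hrdef
  have hmul : ((r:ℝ):ℂ)^m = (((α^2-α-1:ℝ)):ℂ)^n := by
    have expand : ((r:ℝ):ℂ) = (-β^2+4*β-1) * (-γ^2+4*γ-1) := by
      have e2 : (-β^2+4*β-1) * (-γ^2+4*γ-1)
          = (β*γ)^2 - 4*(β*γ)*(β+γ) + (β+γ)^2 + 14*(β*γ) - 4*(β+γ) + 1 := by ring
      rw [e2, hprod, hsum, hrdef]
      push_cast
      ring
    rw [expand, mul_pow, hβm, hγm, ← mul_pow, hprod]
  have hreal : r^m = (α^2-α-1)^n := by exact_mod_cast hmul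
  have hcr : (-α^2+4*α-1) * r = 44 := by
    rw [hrdef]; linear_combination (-(α^3) + α^2 + α + 33) * hα
  have h44 : (44:ℝ)^m = 1 := by
    calc (44:ℝ)^m = ((-α^2+4*α-1)*r)^m := by rw [hcr]
    _ = (α * (α^2-α-1))^n := by rw [mul_pow, hmn, hreal, ← mul_pow]
    _ = 1 := by rw [hαC, one_pow]
  have : (1:ℝ) < 44^m := one_lt_pow₀ (by norm_num) hm
  linarith
theorem tribonacci_mult_indep (α : ℝ) (hα : α ^ 3 = α ^ 2 + α + 1) (hα1 : 1 < α) :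
    ∀ x y : ℤ, (1 / (-α ^ 2 + 4 * α - 1)) ^ x * α ^ y = 1 → x = 0 ∧ y = 0 := by
  intro x y hxy
  have hα2 : α < 2 := by nlinarith [sq_nonneg α]
  have hc1 : 1 < -α ^ 2 + 4 * α - 1 := by nlinarith [sq_nonneg (α-2)]
  set c : ℝ := -α ^ 2 + 4 * α - 1 with hc
  have hc0 : (0:ℝ) < c := by linarith
  have heq : α ^ y = c ^ x := by
    have h' : (c ^ x)⁻¹ * α ^ y = 1 := by rw [← inv_zpow, ← one_div]; exact hxy
    rw [inv_mul_eq_one₀ (zpow_ne_zero x hc0.ne')] at h'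
    exact h'.symm
  have claim : ∀ z w : ℤ, 0 < z → c ^ z = α ^ w → False := by
    intro z w hz h
    have hw : 0 ≤ w := by
      by_contra hw
      push_neg at hw
      have h1 : α ^ w < 1 := zpow_lt_one_of_neg₀ hα1 hw
      have h2 : 1 < c ^ z := one_lt_zpow₀ hc1 hz
      rw [h] at h2; linarith
    lift z to ℕ using hz.le with m
    lift w to ℕ using hw with n
    rw [zpow_natCast, zpow_natCast] at h
    have hm0 : m = 0 := tribo_key α hα hα1 m n (by exact h)
    rw [hm0] at hz; exact lt_irrefl _ hz
  have hx0 : x = 0 := by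
    rcases lt_trichotomy x 0 with hx | hx | hx
    · exact absurd (claim (-x) (-y) (by omega)
        (by rw [zpow_neg, zpow_neg, heq])) not_false
    · exact hx
    · exact absurd (claim x y hx heq.symm) not_false
  refine ⟨hx0, ?_⟩
  rw [hx0, zpow_zero] at heq
  rcases lt_trichotomy y 0 with hy | hy | hy
  · have : α ^ y < 1 := zpow_lt_one_of_neg₀ hα1 hy
    rw [heq] at this; norm_num at this
  · exact hy
  · have : 1 < α ^ y := one_lt_zpow₀ hα1 hy
    rw [heq] at this; norm_num at this
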